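/- The number of inversions of the bit-reversal permutation π_n on [k] with k=2^n equals k²/4 − (n+1)k/4. -/

import Mathlib

open Finset

/-- The bit-reversal permutation on `n` bits: reverses the binary digits of `j`. -/
def bitrev (n j : ℕ) : ℕ := ∑ i ∈ Finset.range n, (j / 2 ^ i % 2) * 2 ^ (n - 1 - i)

lemma sum_two_pow (n : ℕ) : ∑ i ∈ Finset.range n, 2 ^ i = 2 ^ n - 1 := by
  induction n with
  | zero => simp
  | succ n ih =>
      rw [Finset.sum_range_succ, ih, pow_succ]
      have : 1 ≤ 2 ^ n := Nat.one_le_two_pow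
      omega

lemma bitrev_lt (n j : ℕ) : bitrev n j < 2 ^ n := by
  have h1 : bitrev n j ≤ ∑ i ∈ Finset.range n, 2 ^ (n - 1 - i) := by
    apply Finset.sum_le_sum
    intro i _
    have h2 : j / 2 ^ i % 2 ≤ 1 := Nat.le_of_lt_succ (Nat.mod_lt _ (by norm_num))
    calc (j / 2 ^ i % 2) * 2 ^ (n - 1 - i) ≤ 1 * 2 ^ (n - 1 - i) :=
          Nat.mul_le_mul_right _ h2
      _ = 2 ^ (n - 1 - i) := one_mul _
  have h2 : ∑ i ∈ Finset.range n, 2 ^ (n - 1 - i) = 2 ^ n - 1 := by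
    rw [Finset.sum_range_reflect (fun i => 2 ^ i) n]
    exact sum_two_pow n
  have h3 : 1 ≤ 2 ^ n := Nat.one_le_two_pow
  omega

lemma bitrev_succ (n j : ℕ) : bitrev (n + 1) j = bitrev n (j / 2) + j % 2 * 2 ^ n := by
  unfold bitrev
  rw [Finset.sum_range_succ']
  congr 1
  · apply Finset.sum_congr rfl
    intro i _
    have e1 : j / 2 ^ (i + 1) = j / 2 / 2 ^ i := by
      rw [Nat.div_div_eq_div_mul, ← pow_succ']
    have e2 : n + 1 - 1 - (i + 1) = n - 1 - i := by omega
    rw [e1, e2]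
  · simp

lemma bitrev_even (n a : ℕ) (h : a % 2 = 0) : bitrev (n + 1) a = bitrev n (a / 2) := by
  rw [bitrev_succ, h]; simp

lemma bitrev_odd (n a : ℕ) (h : a % 2 = 1) :
    bitrev (n + 1) a = bitrev n (a / 2) + 2 ^ n := by
  rw [bitrev_succ, h]; simp

/-- The inversion set of the bit-reversal permutation. -/
def invs (n : ℕ) : Finset (ℕ × ℕ) :=
  Finset.filter
    (fun p : ℕ × ℕ => p.1 < p.2 ∧ bitrev n p.2 < bitrev n p.1)
    (Finset.range (2 ^ n) ×ˢ Finset.range (2 ^ n))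

lemma mem_invs {n : ℕ} {p : ℕ × ℕ} :
    p ∈ invs n ↔ p.1 < 2 ^ n ∧ p.2 < 2 ^ n ∧ p.1 < p.2 ∧ bitrev n p.2 < bitrev n p.1 := by
  simp only [invs, Finset.mem_filter, Finset.mem_product, Finset.mem_range]
  tauto

/-- The set of strictly increasing pairs in `range (2^n) × range (2^n)`. -/
def T (n : ℕ) : Finset (ℕ × ℕ) :=
  Finset.filter (fun p : ℕ × ℕ => p.1 < p.2)
    (Finset.range (2 ^ n) ×ˢ Finset.range (2 ^ n))

lemma card_T (n : ℕ) : 2 * (T n).card + 2 ^ n = 2 ^ n * 2 ^ n := by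
  set m := 2 ^ n with hm
  have hcard : (T n).card = ∑ j ∈ Finset.range m, j := by
    have hb : (T n).card = ((Finset.range m).sigma fun j => Finset.range j).card := by
      apply Finset.card_nbij' (fun p : ℕ × ℕ => (⟨p.2, p.1⟩ : Σ _ : ℕ, ℕ))
          (fun x : Σ _ : ℕ, ℕ => (x.2, x.1))
      · intro a ha
        simp only [Finset.mem_coe, T, Finset.mem_filter, Finset.mem_product, Finset.mem_range] at ha
        simp only [Finset.mem_coe, Finset.mem_sigma, Finset.mem_range]
        exact ⟨ha.1.2, ha.2⟩
      · intro a ha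
        simp only [Finset.mem_coe, Finset.mem_sigma, Finset.mem_range] at ha
        simp only [Finset.mem_coe, T, Finset.mem_filter, Finset.mem_product, Finset.mem_range]
        exact ⟨⟨lt_trans ha.2 ha.1, ha.1⟩, ha.2⟩
      · intro a _; rfl
      · intro a _; rfl
    rw [hb, Finset.card_sigma]
    simp
  have hgauss := Finset.sum_range_id_mul_two m
  have hm1 : 1 ≤ m := Nat.one_le_two_pow
  have key : m * (m - 1) + m = m * m := by
    cases m with
    | zero => simp
    | succ m' => simp [Nat.succ_sub_one]; ring
  omega

lemma invs_succ (n : ℕ) : (invs (n + 1)).card = 2 * (invs n).card + (T n).card := by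
  classical
  have hsplit1 :
      ((invs (n+1)).filter (fun p => p.1 % 2 = 0)).card
        + ((invs (n+1)).filter (fun p => ¬ p.1 % 2 = 0)).card = (invs (n+1)).card :=
    Finset.card_filter_add_card_filter_not _
  -- even first coordinate forces even second coordinate
  have heven : (invs (n+1)).filter (fun p => p.1 % 2 = 0)
      = (invs (n+1)).filter (fun p => p.1 % 2 = 0 ∧ p.2 % 2 = 0) := by
    ext p
    simp only [Finset.mem_filter]
    constructor
    · rintro ⟨hp, h1⟩
      refine ⟨hp, h1, ?_⟩
      by_contra h2
      have h2' : p.2 % 2 = 1 := by omega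
      rw [mem_invs] at hp
      have e1 := bitrev_even n p.1 h1
      have e2 := bitrev_odd n p.2 h2'
      have := bitrev_lt n (p.1 / 2)
      omega
    · rintro ⟨hp, h1, _⟩; exact ⟨hp, h1⟩
  have hsplit2 :
      (((invs (n+1)).filter (fun p => ¬ p.1 % 2 = 0)).filter (fun p => ¬ p.2 % 2 = 0)).card
        + (((invs (n+1)).filter (fun p => ¬ p.1 % 2 = 0)).filter
            (fun p => ¬ ¬ p.2 % 2 = 0)).card
        = ((invs (n+1)).filter (fun p => ¬ p.1 % 2 = 0)).card :=
    Finset.card_filter_add_card_filter_not _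
  -- A00 ≃ invs n
  have hA00 : ((invs (n+1)).filter (fun p => p.1 % 2 = 0 ∧ p.2 % 2 = 0)).card
      = (invs n).card := by
    apply Finset.card_nbij' (fun p : ℕ × ℕ => (p.1 / 2, p.2 / 2))
      (fun a : ℕ × ℕ => (2 * a.1, 2 * a.2))
    · rintro p hp
      simp only [Finset.mem_coe, Finset.mem_filter, mem_invs] at hp
      obtain ⟨⟨hr1, hr2, hlt, hb⟩, h1, h2⟩ := hp
      rw [Finset.mem_coe, mem_invs]
      try dsimp only
      have e1 := bitrev_even n p.1 h1
      have e2 := bitrev_even n p.2 h2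
      rw [pow_succ] at hr1 hr2
      exact ⟨by omega, by omega, by omega, by omega⟩
    · rintro a ha
      rw [Finset.mem_coe, mem_invs] at ha
      obtain ⟨hr1, hr2, hlt, hb⟩ := ha
      simp only [Finset.mem_coe, Finset.mem_filter, mem_invs]
      try dsimp only
      have e1 := bitrev_even n (2 * a.1) (by omega)
      have e2 := bitrev_even n (2 * a.2) (by omega)
      have d1 : 2 * a.1 / 2 = a.1 := by omega
      have d2 : 2 * a.2 / 2 = a.2 := by omega
      rw [d1] at e1; rw [d2] at e2
      refine ⟨⟨?_, ?_, by omega, by omega⟩, by omega, by omega⟩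
      · rw [pow_succ]; omega
      · rw [pow_succ]; omega
    · rintro p hp
      simp only [Finset.mem_coe, Finset.mem_filter] at hp
      obtain ⟨_, h1, h2⟩ := hp
      ext <;> simp <;> omega
    · rintro a _
      ext <;> simp <;> omega
  -- A11 ≃ invs n
  have hA11 : (((invs (n+1)).filter (fun p => ¬ p.1 % 2 = 0)).filter
        (fun p => ¬ p.2 % 2 = 0)).card = (invs n).card := by
    rw [Finset.filter_filter]
    apply Finset.card_nbij' (fun p : ℕ × ℕ => (p.1 / 2, p.2 / 2))
      (fun a : ℕ × ℕ => (2 * a.1 + 1, 2 * a.2 + 1))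
    · rintro p hp
      simp only [Finset.mem_coe, Finset.mem_filter, mem_invs] at hp
      obtain ⟨⟨hr1, hr2, hlt, hb⟩, h1, h2⟩ := hp
      rw [Finset.mem_coe, mem_invs]
      try dsimp only
      have e1 := bitrev_odd n p.1 (by omega)
      have e2 := bitrev_odd n p.2 (by omega)
      rw [pow_succ] at hr1 hr2
      exact ⟨by omega, by omega, by omega, by omega⟩
    · rintro a ha
      rw [Finset.mem_coe, mem_invs] at ha
      obtain ⟨hr1, hr2, hlt, hb⟩ := ha
      simp only [Finset.mem_coe, Finset.mem_filter, mem_invs]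
      try dsimp only
      have e1 := bitrev_odd n (2 * a.1 + 1) (by omega)
      have e2 := bitrev_odd n (2 * a.2 + 1) (by omega)
      have d1 : (2 * a.1 + 1) / 2 = a.1 := by omega
      have d2 : (2 * a.2 + 1) / 2 = a.2 := by omega
      rw [d1] at e1; rw [d2] at e2
      refine ⟨⟨?_, ?_, by omega, by omega⟩, by omega, by omega⟩
      · rw [pow_succ]; omega
      · rw [pow_succ]; omega
    · rintro p hp
      simp only [Finset.mem_coe, Finset.mem_filter] at hp
      obtain ⟨_, h1, h2⟩ := hp
      ext <;> simp <;> omega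
    · rintro a _
      ext <;> simp <;> omega
  -- A10 ≃ T n
  have hA10 : (((invs (n+1)).filter (fun p => ¬ p.1 % 2 = 0)).filter
        (fun p => ¬ ¬ p.2 % 2 = 0)).card = (T n).card := by
    rw [Finset.filter_filter]
    apply Finset.card_nbij' (fun p : ℕ × ℕ => (p.1 / 2, p.2 / 2))
      (fun a : ℕ × ℕ => (2 * a.1 + 1, 2 * a.2))
    · rintro p hp
      simp only [Finset.mem_coe, Finset.mem_filter, mem_invs] at hp
      obtain ⟨⟨hr1, hr2, hlt, hb⟩, h1, h2⟩ := hp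
      simp only [Finset.mem_coe, T, Finset.mem_filter, Finset.mem_product, Finset.mem_range]
      try dsimp only
      rw [pow_succ] at hr1 hr2
      exact ⟨⟨by omega, by omega⟩, by omega⟩
    · rintro a ha
      simp only [Finset.mem_coe, T, Finset.mem_filter, Finset.mem_product, Finset.mem_range] at ha
      obtain ⟨⟨hr1, hr2⟩, hlt⟩ := ha
      simp only [Finset.mem_coe, Finset.mem_filter, mem_invs]
      try dsimp only
      have e1 := bitrev_odd n (2 * a.1 + 1) (by omega)
      have e2 := bitrev_even n (2 * a.2) (by omega)
      have d1 : (2 * a.1 + 1) / 2 = a.1 := by omega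
      have d2 : 2 * a.2 / 2 = a.2 := by omega
      rw [d1] at e1; rw [d2] at e2
      have hb2 := bitrev_lt n a.2
      refine ⟨⟨?_, ?_, by omega, by omega⟩, by omega, by omega⟩
      · rw [pow_succ]; omega
      · rw [pow_succ]; omega
    · rintro p hp
      simp only [Finset.mem_coe, Finset.mem_filter] at hp
      obtain ⟨_, h1, h2⟩ := hp
      ext <;> simp <;> omega
    · rintro a _
      ext <;> simp <;> omega
  rw [heven, hA00] at hsplit1
  rw [hA11, hA10] at hsplit2
  omega

lemma invs_card (n : ℕ) (hn : 1 ≤ n) :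
    4 * (invs n).card + (n + 1) * 2 ^ n = 2 ^ n * 2 ^ n := by
  induction n, hn using Nat.le_induction with
  | base =>
      have h : (invs 1).card = 0 := by decide +kernel
      rw [h]
      norm_num
  | succ n hn ih =>
      have h1 := invs_succ n
      have h2 := card_T n
      rw [h1]
      zify at ih h2 ⊢
      linear_combination (2 : ℤ) * ih + 2 * h2

theorem bitrev_inversions (n k : ℕ) (hn : 1 ≤ n) (hk : k = 2 ^ n) :
    ((Finset.filter
        (fun p : ℕ × ℕ => p.1 < p.2 ∧ bitrev n p.2 < bitrev n p.1)
        (Finset.range k ×ˢ Finset.range k)).card : ℝ)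
      = (k : ℝ) ^ 2 / 4 - ((n : ℝ) + 1) * (k : ℝ) / 4 := by
  subst hk
  have h := invs_card n hn
  have hr : 4 * ((invs n).card : ℝ) + ((n : ℝ) + 1) * 2 ^ n = 2 ^ n * 2 ^ n := by
    exact_mod_cast h
  show ((invs n).card : ℝ) = _
  push_cast
  nlinarith [hr]
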